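/- arXiv:2208.12689 — 2 statements merged into one kernel-verified Lean document; each statement's English description precedes it below -/
import Mathlib

section
/- Let R ∈ {0,1}^{m×n} be a binary matrix with row sums d_u = Σ_i R_{ui} and column sums d_i = Σ_u R_{ui}, let α ≥ 0, and let d_max be an upper bound on all d_u and all d_i with d_max > 0. Let Ṙ be the matrix with entries Ṙ_{ui} = R_{ui}/(√(d_u+α) · √(d_i+α)). If σ ≥ 0 and p ∈ ℝ^m, q ∈ ℝ^n are unit vectors with Ṙ q = σ p and Ṙᵀ p = σ q, then σ ≤ d_max/(d_max + α). -/
open Matrix BigOperators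

lemma frac_mono_aux (d dmax α : ℝ) (hd : 0 ≤ d) (hle : d ≤ dmax)
    (hα : 0 ≤ α) (hdm : 0 < dmax) : d / (d + α) ≤ dmax / (dmax + α) := by
  have hdm' : 0 < dmax + α := by linarith
  rcases eq_or_lt_of_le (by linarith : (0:ℝ) ≤ d + α) with h | h
  · rw [← h]
    simp [div_zero]
    positivity
  · rw [div_le_div_iff₀ h hdm']
    nlinarith

/-- Theorem 3: for a binary matrix `R` with degrees bounded by `d_max > 0` and
`α ≥ 0`, every singular value of the renormalized matrix
`Ṙ_{ui} = R_{ui}/(√(d_u+α) √(d_i+α))` is at most `d_max/(d_max+α)`. -/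
theorem renormalized_singular_value_bound {m n : ℕ}
    (R : Matrix (Fin m) (Fin n) ℝ)
    (hbin : ∀ u i, R u i = 0 ∨ R u i = 1)
    (α : ℝ) (hα : 0 ≤ α)
    (dmax : ℝ) (hdmax : 0 < dmax)
    (hrow : ∀ u, (∑ i, R u i) ≤ dmax)
    (hcol : ∀ i, (∑ u, R u i) ≤ dmax)
    (Rd : Matrix (Fin m) (Fin n) ℝ)
    (hRd : ∀ u i, Rd u i =
      R u i / (Real.sqrt ((∑ j, R u j) + α) * Real.sqrt ((∑ v, R v i) + α)))
    (σ : ℝ) (p : Fin m → ℝ) (q : Fin n → ℝ)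
    (hσ : 0 ≤ σ) (hp : (∑ u, p u ^ 2) = 1) (hq : (∑ i, q i ^ 2) = 1)
    (hpq : Rd *ᵥ q = σ • p) (hqp : Rdᵀ *ᵥ p = σ • q) :
    σ ≤ dmax / (dmax + α) := by
  have hR0 : ∀ u i, 0 ≤ R u i := by
    intro u i; rcases hbin u i with h | h <;> simp [h]
  have hdu0 : ∀ u, 0 ≤ ∑ j, R u j := fun u => Finset.sum_nonneg fun j _ => hR0 u j
  have hdi0 : ∀ i, 0 ≤ ∑ v, R v i := fun i => Finset.sum_nonneg fun v _ => hR0 v i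
  -- σ equals the bilinear form
  have hσeq : σ = ∑ u, ∑ i, Rd u i * (p u * q i) := by
    have h1 : ∑ u, p u * (Rd *ᵥ q) u = ∑ u, p u * (σ • p) u := by rw [hpq]
    have h2 : ∑ u, p u * (σ • p) u = σ := by
      simp only [Pi.smul_apply, smul_eq_mul]
      calc ∑ u, p u * (σ * p u) = σ * ∑ u, p u ^ 2 := by
            rw [Finset.mul_sum]; exact Finset.sum_congr rfl fun u _ => by ring
        _ = σ := by rw [hp, mul_one]
    rw [← h2, ← h1]
    refine Finset.sum_congr rfl fun u _ => ?_
    simp only [mulVec, dotProduct]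
    rw [Finset.mul_sum]
    exact Finset.sum_congr rfl fun i _ => by ring
  -- pointwise AM-GM bound
  have key : ∀ u i, 2 * (Rd u i * (p u * q i)) ≤
      R u i * (p u)^2 / ((∑ j, R u j) + α) + R u i * (q i)^2 / ((∑ v, R v i) + α) := by
    intro u i
    rcases hbin u i with h | h
    · rw [hRd, h]; simp
    · have ha1 : (1:ℝ) ≤ ∑ j, R u j := by
        calc (1:ℝ) = R u i := h.symm
          _ ≤ ∑ j, R u j := Finset.single_le_sum (fun j _ => hR0 u j) (Finset.mem_univ i)
      have hb1 : (1:ℝ) ≤ ∑ v, R v i := by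
        calc (1:ℝ) = R u i := h.symm
          _ ≤ ∑ v, R v i := Finset.single_le_sum (fun v _ => hR0 v i) (Finset.mem_univ u)
      have ha : 0 < (∑ j, R u j) + α := by linarith
      have hb : 0 < (∑ v, R v i) + α := by linarith
      rw [hRd, h]
      set sa := Real.sqrt ((∑ j, R u j) + α) with hsadef
      set sb := Real.sqrt ((∑ v, R v i) + α) with hsbdef
      have hsa : 0 < sa := Real.sqrt_pos.2 ha
      have hsb : 0 < sb := Real.sqrt_pos.2 hb
      have hsa2 : sa ^ 2 = (∑ j, R u j) + α := Real.sq_sqrt ha.le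
      have hsb2 : sb ^ 2 = (∑ v, R v i) + α := Real.sq_sqrt hb.le
      rw [← hsa2, ← hsb2]
      have hsa' : sa ≠ 0 := hsa.ne'
      have hsb' : sb ≠ 0 := hsb.ne'
      field_simp
      nlinarith [sq_nonneg (p u * sb - q i * sa), mul_pos hsa hsb,
        mul_pos (mul_pos hsa hsb) (mul_pos hsa hsb)]
  -- sum the bound
  set S1 := ∑ u, (p u)^2 * ((∑ j, R u j) / ((∑ j, R u j) + α)) with hS1
  set S2 := ∑ i, (q i)^2 * ((∑ v, R v i) / ((∑ v, R v i) + α)) with hS2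
  have hsum : 2 * σ ≤ S1 + S2 := by
    have h0 : 2 * σ = ∑ u, ∑ i, 2 * (Rd u i * (p u * q i)) := by
      rw [hσeq, Finset.mul_sum]
      refine Finset.sum_congr rfl fun u _ => ?_
      rw [Finset.mul_sum]
    rw [h0]
    calc ∑ u, ∑ i, 2 * (Rd u i * (p u * q i))
        ≤ ∑ u, ∑ i, (R u i * (p u)^2 / ((∑ j, R u j) + α)
            + R u i * (q i)^2 / ((∑ v, R v i) + α)) := by
          exact Finset.sum_le_sum fun u _ => Finset.sum_le_sum fun i _ => key u i
      _ = (∑ u, ∑ i, R u i * (p u)^2 / ((∑ j, R u j) + α))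
            + (∑ u, ∑ i, R u i * (q i)^2 / ((∑ v, R v i) + α)) := by
          rw [← Finset.sum_add_distrib]
          exact Finset.sum_congr rfl fun u _ => Finset.sum_add_distrib
      _ = S1 + S2 := by
          congr 1
          · refine Finset.sum_congr rfl fun u _ => ?_
            rw [← Finset.sum_div, ← Finset.sum_mul]
            ring
          · rw [Finset.sum_comm]
            refine Finset.sum_congr rfl fun i _ => ?_
            rw [← Finset.sum_div, ← Finset.sum_mul]
            ring
  have hb1 : S1 ≤ dmax / (dmax + α) := by
    calc S1 ≤ ∑ u, (p u)^2 * (dmax / (dmax + α)) :=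
          Finset.sum_le_sum fun u _ => mul_le_mul_of_nonneg_left
            (frac_mono_aux _ _ _ (hdu0 u) (hrow u) hα hdmax) (sq_nonneg _)
      _ = dmax / (dmax + α) := by rw [← Finset.sum_mul, hp, one_mul]
  have hb2 : S2 ≤ dmax / (dmax + α) := by
    calc S2 ≤ ∑ i, (q i)^2 * (dmax / (dmax + α)) :=
          Finset.sum_le_sum fun i _ => mul_le_mul_of_nonneg_left
            (frac_mono_aux _ _ _ (hdi0 i) (hcol i) hα hdmax) (sq_nonneg _)
      _ = dmax / (dmax + α) := by rw [← Finset.sum_mul, hq, one_mul]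
  linarith
end

section
/- Let R ∈ {0,1}^{m×n} be a binary matrix with row sums d_u = Σ_i R_{ui} and column sums d_i = Σ_u R_{ui}, let α ≥ 0, and let d_max be an upper bound on all d_u and all d_i with d_max > 0. Then for all x ∈ ℝ^m and y ∈ ℝ^n with ‖x‖² + ‖y‖² = 1, the quadratic form of the renormalized bipartite adjacency matrix satisfies 2 · Σ_{u,i} R_{ui} · x_u y_i / (√(d_u+α) · √(d_i+α)) ≤ 1 − α/(d_max + α) = d_max/(d_max + α). -/
open Matrix BigOperators

/-- Equation (30): Rayleigh-quotient bound for the renormalized bipartite adjacency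
matrix. For a unit vector `(x, y)`,
`2 Σ_{u,i} R_{ui} x_u y_i/(√(d_u+α) √(d_i+α)) ≤ 1 − α/(d_max+α) = d_max/(d_max+α)`. -/
theorem renormalized_rayleigh_bound {m n : ℕ}
    (R : Matrix (Fin m) (Fin n) ℝ)
    (hbin : ∀ u i, R u i = 0 ∨ R u i = 1)
    (α : ℝ) (hα : 0 ≤ α)
    (dmax : ℝ) (hdmax : 0 < dmax)
    (hrow : ∀ u, (∑ i, R u i) ≤ dmax)
    (hcol : ∀ i, (∑ u, R u i) ≤ dmax)
    (x : Fin m → ℝ) (y : Fin n → ℝ)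
    (hunit : (∑ u, x u ^ 2) + (∑ i, y i ^ 2) = 1) :
    (2 * ∑ u, ∑ i,
        R u i * x u * y i /
          (Real.sqrt ((∑ j, R u j) + α) * Real.sqrt ((∑ v, R v i) + α)) ≤
      1 - α / (dmax + α)) ∧
    1 - α / (dmax + α) = dmax / (dmax + α) := by
  have hden : (0:ℝ) < dmax + α := by linarith
  have heq : 1 - α / (dmax + α) = dmax / (dmax + α) := by field_simp; ring
  refine ⟨?_, heq⟩
  rw [heq]
  have hRnn : ∀ u i, 0 ≤ R u i := fun u i => by rcases hbin u i with h | h <;> simp [h]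
  set c := dmax / (dmax + α) with hc
  have hc0 : (0:ℝ) ≤ c := by positivity
  have ratio : ∀ t : ℝ, 0 ≤ t → t ≤ dmax → t / (t + α) ≤ c := by
    intro t ht htd
    rcases eq_or_lt_of_le (by linarith : (0:ℝ) ≤ t + α) with h0 | h0
    · rw [← h0, div_zero]; exact hc0
    · rw [hc, div_le_div_iff₀ h0 hden]; nlinarith
  -- pointwise key inequality
  have key : ∀ (u : Fin m) (i : Fin n),
      2 * (R u i * x u * y i /
          (Real.sqrt ((∑ j, R u j) + α) * Real.sqrt ((∑ v, R v i) + α)))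
        ≤ R u i * (x u ^ 2 / ((∑ j, R u j) + α))
          + R u i * (y i ^ 2 / ((∑ v, R v i) + α)) := by
    intro u i
    rcases hbin u i with h | h
    · simp [h]
    · have hpu : (0:ℝ) < (∑ j, R u j) + α := by
        have h1 : (1:ℝ) ≤ ∑ j, R u j := by
          calc (1:ℝ) = R u i := h.symm
            _ ≤ ∑ j, R u j := Finset.single_le_sum (fun j _ => hRnn u j) (Finset.mem_univ i)
        linarith
      have hqi : (0:ℝ) < (∑ v, R v i) + α := by
        have h1 : (1:ℝ) ≤ ∑ v, R v i := by
          calc (1:ℝ) = R u i := h.symm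
            _ ≤ ∑ v, R v i := Finset.single_le_sum (fun v _ => hRnn v i) (Finset.mem_univ u)
        linarith
      have ha : 0 < Real.sqrt ((∑ j, R u j) + α) := Real.sqrt_pos.mpr hpu
      have hb : 0 < Real.sqrt ((∑ v, R v i) + α) := Real.sqrt_pos.mpr hqi
      have ha2 : (Real.sqrt ((∑ j, R u j) + α)) ^ 2 = (∑ j, R u j) + α :=
        Real.sq_sqrt hpu.le
      have hb2 : (Real.sqrt ((∑ v, R v i) + α)) ^ 2 = (∑ v, R v i) + α :=
        Real.sq_sqrt hqi.le
      rw [h]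
      set a := Real.sqrt ((∑ j, R u j) + α)
      set b := Real.sqrt ((∑ v, R v i) + α)
      have hxy : 2 * (x u / a) * (y i / b) ≤ (x u / a) ^ 2 + (y i / b) ^ 2 :=
        two_mul_le_add_sq _ _
      have e1 : 1 * x u * y i / (a * b) = (x u / a) * (y i / b) := by
        rw [div_mul_div_comm]; ring_nf
      have e2 : (x u / a) ^ 2 = x u ^ 2 / ((∑ j, R u j) + α) := by
        rw [div_pow, ha2]
      have e3 : (y i / b) ^ 2 = y i ^ 2 / ((∑ v, R v i) + α) := by
        rw [div_pow, hb2]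
      calc 2 * (1 * x u * y i / (a * b)) = 2 * (x u / a) * (y i / b) := by
            rw [e1]; ring
        _ ≤ (x u / a) ^ 2 + (y i / b) ^ 2 := hxy
        _ = 1 * (x u ^ 2 / ((∑ j, R u j) + α)) + 1 * (y i ^ 2 / ((∑ v, R v i) + α)) := by
            rw [e2, e3]; ring
  calc 2 * ∑ u, ∑ i,
        R u i * x u * y i /
          (Real.sqrt ((∑ j, R u j) + α) * Real.sqrt ((∑ v, R v i) + α))
      = ∑ u, ∑ i, 2 * (R u i * x u * y i /
          (Real.sqrt ((∑ j, R u j) + α) * Real.sqrt ((∑ v, R v i) + α))) := by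
        rw [Finset.mul_sum]
        exact Finset.sum_congr rfl fun u _ => by rw [Finset.mul_sum]
    _ ≤ ∑ u, ∑ i, (R u i * (x u ^ 2 / ((∑ j, R u j) + α))
          + R u i * (y i ^ 2 / ((∑ v, R v i) + α))) :=
        Finset.sum_le_sum fun u _ => Finset.sum_le_sum fun i _ => key u i
    _ = (∑ u, x u ^ 2 * ((∑ j, R u j) / ((∑ j, R u j) + α)))
          + ∑ i, y i ^ 2 * ((∑ v, R v i) / ((∑ v, R v i) + α)) := by
        simp only [Finset.sum_add_distrib]
        congr 1
        · exact Finset.sum_congr rfl fun u _ => by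
            rw [← Finset.sum_mul, mul_comm, div_mul_eq_mul_div, mul_div_assoc]
        · rw [Finset.sum_comm]
          exact Finset.sum_congr rfl fun i _ => by
            rw [← Finset.sum_mul, mul_comm, div_mul_eq_mul_div, mul_div_assoc]
    _ ≤ (∑ u, x u ^ 2 * c) + ∑ i, y i ^ 2 * c := by
        refine add_le_add (Finset.sum_le_sum fun u _ => ?_) (Finset.sum_le_sum fun i _ => ?_)
        · exact mul_le_mul_of_nonneg_left
            (ratio _ (Finset.sum_nonneg fun j _ => hRnn u j) (hrow u)) (sq_nonneg _)
        · exact mul_le_mul_of_nonneg_left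
            (ratio _ (Finset.sum_nonneg fun v _ => hRnn v i) (hcol i)) (sq_nonneg _)
    _ = c := by rw [← Finset.sum_mul, ← Finset.sum_mul, ← add_mul, hunit, one_mul]
end
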